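/- arXiv:1707.05133 — 6 statements merged into one kernel-verified Lean document; each statement's English description precedes it below -/
import Mathlib

section
/- Let A be an m×n integer matrix of rank r with r ≥ 1. Then the quotient group (Fin m → ℤ) / range(A.mulVecLin) is torsion-free if and only if d_r(A) = 1, where d_r(A) is the r-th determinant divisor of A. -/
/-- The `i`-th determinant divisor of an integer matrix: the gcd of the absolute
values of all `i × i` minors (with `d_0 = 1`). -/
def detDivisor {m n : ℕ} (A : Matrix (Fin m) (Fin n) ℤ) (i : ℕ) : ℕ :=
  Finset.univ.gcd
    (fun p : {ρ : Fin i → Fin m // Function.Injective ρ} ×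
        {σ : Fin i → Fin n // Function.Injective σ} =>
      ((A.submatrix p.1.1 p.2.1).det).natAbs)

lemma detDivisor_dvd_natAbs {m n : ℕ} (A : Matrix (Fin m) (Fin n) ℤ) {r : ℕ}
    {ρ : Fin r → Fin m} (hρ : Function.Injective ρ)
    {σ : Fin r → Fin n} (hσ : Function.Injective σ) :
    detDivisor A r ∣ ((A.submatrix ρ σ).det).natAbs :=
  Finset.gcd_dvd (Finset.mem_univ (⟨⟨ρ, hρ⟩, ⟨σ, hσ⟩⟩ :
    {ρ : Fin r → Fin m // Function.Injective ρ} ×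
      {σ : Fin r → Fin n // Function.Injective σ}))

lemma detDivisor_dvd_det {m n : ℕ} (A : Matrix (Fin m) (Fin n) ℤ) {r : ℕ}
    {ρ : Fin r → Fin m} (hρ : Function.Injective ρ)
    {σ : Fin r → Fin n} (hσ : Function.Injective σ) :
    ((detDivisor A r : ℤ)) ∣ (A.submatrix ρ σ).det :=
  Int.dvd_natAbs.mp (Int.natCast_dvd_natCast.mpr (detDivisor_dvd_natAbs A hρ hσ))

lemma det_mul_submatrix {m m' n r : ℕ} (A : Matrix (Fin m) (Fin n) ℤ)
    (C : Matrix (Fin m') (Fin m) ℤ) (ρ : Fin r → Fin m') (σ : Fin r → Fin n) :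
    ((C * A).submatrix ρ σ).det =
      ∑ d : Fin r → Fin m, (∏ i, C (ρ i) (d i)) * (A.submatrix d σ).det := by
  have h1 : ((C * A).submatrix ρ σ).det
      = Matrix.detRowAlternating (R := ℤ) (n := Fin r)
          (fun i => ∑ t : Fin m, C (ρ i) t • fun j => A t (σ j)) := by
    congr 1
    funext i j
    simp [Matrix.mul_apply, Finset.sum_apply]
  rw [h1, ← AlternatingMap.coe_multilinearMap, MultilinearMap.map_sum]
  refine Finset.sum_congr rfl fun d _ => ?_
  have h2 := (Matrix.detRowAlternating (R := ℤ) (n := Fin r)).toMultilinearMap.map_smul_univ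
    (fun i => C (ρ i) (d i)) (fun i => fun j => A (d i) (σ j))
  have h3 : (A.submatrix d σ).det = Matrix.detRowAlternating (fun i j => A (d i) (σ j)) := rfl
  simpa [smul_eq_mul, h3] using h2

lemma detDivisor_dvd_mul_left {m m' n : ℕ} (A : Matrix (Fin m) (Fin n) ℤ)
    (C : Matrix (Fin m') (Fin m) ℤ) (r : ℕ) :
    detDivisor A r ∣ detDivisor (C * A) r := by
  apply Finset.dvd_gcd
  rintro ⟨⟨ρ, hρ⟩, ⟨σ, hσ⟩⟩ -
  refine Int.natCast_dvd_natCast.mp (Int.dvd_natAbs.mpr ?_)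
  rw [det_mul_submatrix]
  refine Finset.dvd_sum fun d _ => ?_
  by_cases hd : Function.Injective d
  · exact Dvd.dvd.mul_left (detDivisor_dvd_det A hd hσ) _
  · rw [Function.not_injective_iff] at hd
    obtain ⟨i, i', hii, hne⟩ := hd
    have : (A.submatrix d σ).det = 0 :=
      Matrix.det_zero_of_row_eq hne (by funext j; simp [hii])
    simp [this]

open Matrix in
lemma detDivisor_transpose {m n : ℕ} (A : Matrix (Fin m) (Fin n) ℤ) (r : ℕ) :
    detDivisor Aᵀ r = detDivisor A r := by
  have key : ∀ {m n : ℕ} (A : Matrix (Fin m) (Fin n) ℤ),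
      detDivisor Aᵀ r ∣ detDivisor A r := by
    intro m n A
    apply Finset.dvd_gcd
    rintro ⟨⟨ρ, hρ⟩, ⟨σ, hσ⟩⟩ -
    have h := detDivisor_dvd_natAbs Aᵀ hσ hρ
    have he : (Aᵀ.submatrix σ ρ) = (A.submatrix ρ σ)ᵀ := rfl
    rwa [he, Matrix.det_transpose] at h
  have h2 := key Aᵀ
  rw [Matrix.transpose_transpose] at h2
  exact Nat.dvd_antisymm (key A) h2

open Matrix in
lemma detDivisor_dvd_mul_right {m n n' : ℕ} (A : Matrix (Fin m) (Fin n) ℤ)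
    (C : Matrix (Fin n) (Fin n') ℤ) (r : ℕ) :
    detDivisor A r ∣ detDivisor (A * C) r := by
  rw [← detDivisor_transpose A, ← detDivisor_transpose (A * C), Matrix.transpose_mul]
  exact detDivisor_dvd_mul_left Aᵀ Cᵀ r

lemma detDivisor_dvd_of_range_le {m n k : ℕ} (A : Matrix (Fin m) (Fin n) ℤ)
    (B : Matrix (Fin m) (Fin k) ℤ)
    (h : LinearMap.range B.mulVecLin ≤ LinearMap.range A.mulVecLin) (r : ℕ) :
    detDivisor A r ∣ detDivisor B r := by
  have hcol : ∀ j, ∃ v, A.mulVec v = fun i => B i j := by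
    intro j
    have hj : (fun i => B i j) ∈ LinearMap.range B.mulVecLin :=
      ⟨Pi.single j 1, by simp [Matrix.mulVecLin_apply, Matrix.mulVec_single]; rfl⟩
    exact h hj
  choose v hv using hcol
  have hAC : A * (Matrix.of fun t j => v j t) = B := by
    ext i j
    have := congrFun (hv j) i
    simpa [Matrix.mul_apply, Matrix.mulVec, dotProduct] using this
  rw [← hAC]
  exact detDivisor_dvd_mul_right A _ r

lemma natAbs_prod {ι : Type*} (s : Finset ι) (f : ι → ℤ) :
    (∏ i ∈ s, f i).natAbs = ∏ i ∈ s, (f i).natAbs := by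
  classical
  induction s using Finset.induction with
  | empty => simp
  | insert x s h ih => simp [Finset.prod_insert h, Int.natAbs_mul, ih]

lemma torsionFree_iff_isUnit {m k : ℕ} (N : Submodule ℤ (Fin m → ℤ))
    (bM : Module.Basis (Fin m) ℤ (Fin m → ℤ)) (bN : Module.Basis (Fin k) ℤ N)
    (f : Fin k ↪ Fin m) (a : Fin k → ℤ)
    (hsnf : ∀ i, (bN i : Fin m → ℤ) = a i • bM (f i)) :
    (∀ g : (Fin m → ℤ) ⧸ N, g ≠ 0 → ¬IsOfFinAddOrder g) ↔ ∀ j, IsUnit (a j) := by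
  constructor
  · intro htf j
    have ha : a j ≠ 0 := by
      intro h0
      apply bN.ne_zero j
      have : (bN j : Fin m → ℤ) = 0 := by rw [hsnf j, h0, zero_smul]
      exact Subtype.ext this
    -- the class of bM (f j) is torsion, hence zero
    have hsm : (a j) • (Submodule.Quotient.mk (p := N) (bM (f j))) = 0 := by
      rw [← Submodule.Quotient.mk_smul, Submodule.Quotient.mk_eq_zero, ← hsnf j]
      exact (bN j).2
    have hx : Submodule.Quotient.mk (p := N) (bM (f j)) = 0 := by
      by_contra hne
      apply htf _ hne
      rw [isOfFinAddOrder_iff_nsmul_eq_zero]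
      refine ⟨(a j).natAbs, Int.natAbs_pos.mpr ha, ?_⟩
      rw [← natCast_zsmul]
      rcases Int.natAbs_eq (a j) with h | h
      · rw [← h]; exact hsm
      · rw [show ((a j).natAbs : ℤ) = -(a j) by omega, neg_smul, hsm, neg_zero]
    have hmem : bM (f j) ∈ N := (Submodule.Quotient.mk_eq_zero N).mp hx
    set y : N := ⟨bM (f j), hmem⟩ with hy
    have hrep : bM (f j) = ∑ i, (bN.repr y i * a i) • bM (f i) := by
      have h1 : (y : Fin m → ℤ) = ∑ i, bN.repr y i • (bN i : Fin m → ℤ) := by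
        conv_lhs => rw [← bN.sum_repr y]
        push_cast
        rfl
      calc bM (f j) = (y : Fin m → ℤ) := rfl
        _ = ∑ i, (bN.repr y i * a i) • bM (f i) := by
            rw [h1]; refine Finset.sum_congr rfl fun i _ => ?_
            rw [hsnf i, smul_smul]
    have hcoord := congrArg (fun z => bM.repr z (f j)) hrep
    simp only [map_sum, map_smul, Module.Basis.repr_self, Finsupp.smul_single,
      Finsupp.single_apply, Finsupp.coe_finset_sum, Finset.sum_apply,
      f.injective.eq_iff, smul_eq_mul, mul_one] at hcoord
    rw [Finset.sum_ite_eq' Finset.univ j (fun i => bN.repr y i * a i)] at hcoord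
    simp at hcoord
    exact IsUnit.of_mul_eq_one _ (by rw [mul_comm]; exact hcoord.symm)
  · intro hu x hx hfin
    obtain ⟨c, hc, hcx⟩ := isOfFinAddOrder_iff_nsmul_eq_zero.mp hfin
    obtain ⟨z, rfl⟩ := Submodule.Quotient.mk_surjective N x
    have hN : (c : ℤ) • z ∈ N := by
      rw [← Submodule.Quotient.mk_eq_zero, Submodule.Quotient.mk_smul, natCast_zsmul]
      exact hcx
    apply hx
    rw [Submodule.Quotient.mk_eq_zero]
    -- coordinates of z vanish off the range of f
    set w : N := ⟨(c : ℤ) • z, hN⟩ with hw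
    have h1 : (c : ℤ) • z = ∑ i, (bN.repr w i * a i) • bM (f i) := by
      have h2 : (w : Fin m → ℤ) = ∑ i, bN.repr w i • (bN i : Fin m → ℤ) := by
        conv_lhs => rw [← bN.sum_repr w]
        push_cast
        rfl
      calc (c : ℤ) • z = (w : Fin m → ℤ) := rfl
        _ = ∑ i, (bN.repr w i * a i) • bM (f i) := by
            rw [h2]; refine Finset.sum_congr rfl fun i _ => ?_
            rw [hsnf i, smul_smul]
    have hzero : ∀ t, t ∉ Set.range f → bM.repr z t = 0 := by
      intro t ht
      have hcoord := congrArg (fun v => bM.repr v t) h1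
      simp only [map_smul, map_sum, Module.Basis.repr_self, Finsupp.smul_single,
        Finsupp.single_apply, Finsupp.coe_finset_sum, Finset.sum_apply,
        smul_eq_mul, mul_one, Pi.smul_apply] at hcoord
      have hrhs : ∀ i ∈ Finset.univ, (if f i = t then bN.repr w i * a i else 0) = 0 := by
        intro i _
        rw [if_neg (fun h => ht ⟨i, h⟩)]
      rw [Finset.sum_congr rfl hrhs, Finset.sum_const_zero] at hcoord
      have : (c : ℤ) ≠ 0 := Int.natCast_ne_zero.mpr hc.ne'
      exact (mul_eq_zero.mp hcoord).resolve_left this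
    -- each basis vector in the range of f lies in N
    have hbm : ∀ i : Fin k, bM (f i) ∈ N := by
      intro i
      obtain ⟨u, hu'⟩ := hu i
      have h3 : a i • bM (f i) ∈ N := by rw [← hsnf i]; exact (bN i).2
      have h4 : ((u⁻¹ : ℤˣ) : ℤ) • (a i • bM (f i)) ∈ N := Submodule.smul_mem _ _ h3
      rwa [smul_smul, ← hu', Units.inv_mul, one_smul] at h4
    have hz : z = ∑ t, bM.repr z t • bM t := (bM.sum_repr z).symm
    rw [hz]
    refine Submodule.sum_mem _ fun t _ => ?_
    by_cases ht : t ∈ Set.range f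
    · obtain ⟨i, rfl⟩ := ht
      exact Submodule.smul_mem _ _ (hbm i)
    · rw [hzero t ht, zero_smul]
      exact Submodule.zero_mem _

lemma detDivisor_diagLike {m k : ℕ} (f : Fin k ↪ Fin m) (a : Fin k → ℤ) :
    detDivisor (Matrix.of fun t (j : Fin k) => if t = f j then a j else 0) k
      = ∏ j, (a j).natAbs := by
  set D0 : Matrix (Fin m) (Fin k) ℤ :=
    Matrix.of fun t (j : Fin k) => if t = f j then a j else 0 with hD0
  apply Nat.dvd_antisymm
  · -- the diagonal minor equals ∏ a
    have hmem := detDivisor_dvd_natAbs D0 (ρ := ⇑f) f.injective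
      (σ := id) Function.injective_id
    have hdiag : D0.submatrix ⇑f id = Matrix.diagonal a := by
      ext i j
      by_cases h : i = j
      · subst h; simp [hD0, Matrix.diagonal]
      · simp [hD0, Matrix.diagonal, h, f.injective.ne h]
    rwa [hdiag, Matrix.det_diagonal, natAbs_prod] at hmem
  · -- ∏ |a| divides every minor
    apply Finset.dvd_gcd
    rintro ⟨⟨ρ, hρ⟩, ⟨σ, hσ⟩⟩ -
    have hb : Function.Bijective σ := Finite.injective_iff_bijective.mp hσ
    have hsub : D0.submatrix ρ σ =
        Matrix.of fun i j => a (σ j) * (if ρ i = f (σ j) then (1 : ℤ) else 0) := by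
      ext i j
      simp only [hD0, Matrix.submatrix_apply, Matrix.of_apply, mul_ite, mul_one, mul_zero]
    have hdet : (D0.submatrix ρ σ).det =
        (∏ j, a (σ j)) *
          (Matrix.of fun i j => if ρ i = f (σ j) then (1 : ℤ) else 0).det := by
      rw [hsub]
      exact Matrix.det_mul_row (fun j => a (σ j))
        (Matrix.of fun i j => if ρ i = f (σ j) then (1 : ℤ) else 0)
    have hperm : (∏ j, a (σ j)) = ∏ j, a j :=
      Fintype.prod_bijective σ hb (fun j => a (σ j)) a (fun _ => rfl)
    refine Int.natCast_dvd_natCast.mp (Int.dvd_natAbs.mpr ?_)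
    rw [hdet, hperm]
    push_cast
    refine Dvd.dvd.mul_right ?_ _
    exact Finset.prod_dvd_prod_of_dvd _ _ fun j _ => (abs_dvd _ _).mpr dvd_rfl

/-- For an integer matrix `A` of rank `r ≥ 1`, the cokernel of `A`
is torsion-free iff the `r`-th determinant divisor of `A` equals `1`. -/
theorem statement1 (m n : ℕ) (A : Matrix (Fin m) (Fin n) ℤ)
    (r : ℕ) (hr : A.rank = r) (hr1 : 1 ≤ r) :
    (∀ g : (Fin m → ℤ) ⧸ LinearMap.range A.mulVecLin, g ≠ 0 → ¬IsOfFinAddOrder g) ↔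
      detDivisor A r = 1 := by
  classical
  set N := LinearMap.range A.mulVecLin with hN
  obtain ⟨k, ⟨bM, bN, f, a, hsnf⟩⟩ := N.smithNormalForm (Pi.basisFun ℤ (Fin m))
  have hk : k = r := by
    have hrk : A.rank = Module.finrank ℤ N := rfl
    rw [hrk, Module.finrank_eq_card_basis bN, Fintype.card_fin] at hr
    exact hr
  subst hk
  set D : Matrix (Fin m) (Fin k) ℤ := Matrix.of fun i j => (bN j : Fin m → ℤ) i with hD
  have hrange : LinearMap.range D.mulVecLin = N := by
    apply le_antisymm
    · rintro _ ⟨w, rfl⟩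
      have hmv : D.mulVecLin w = ∑ j, w j • ((bN j : Fin m → ℤ)) := by
        funext i
        simp [Matrix.mulVecLin_apply, Matrix.mulVec, dotProduct, hD,
          Finset.sum_apply, mul_comm]
      rw [hmv]
      exact Submodule.sum_mem _ fun j _ => Submodule.smul_mem _ _ (bN j).2
    · intro x hx
      refine ⟨fun j => bN.repr ⟨x, hx⟩ j, ?_⟩
      have h2 : ((⟨x, hx⟩ : N) : Fin m → ℤ)
          = ∑ j, bN.repr ⟨x, hx⟩ j • (bN j : Fin m → ℤ) := by
        conv_lhs => rw [← bN.sum_repr ⟨x, hx⟩]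
        push_cast
        rfl
      have hmv : D.mulVecLin (fun j => bN.repr ⟨x, hx⟩ j)
          = ∑ j, bN.repr ⟨x, hx⟩ j • ((bN j : Fin m → ℤ)) := by
        funext i
        simp [Matrix.mulVecLin_apply, Matrix.mulVec, dotProduct, hD,
          Finset.sum_apply, mul_comm]
      rw [hmv, ← h2]
  have h5 : detDivisor A k = detDivisor D k :=
    Nat.dvd_antisymm
      (detDivisor_dvd_of_range_le A D (by rw [hrange]) k)
      (detDivisor_dvd_of_range_le D A (by rw [hrange]) k)
  set P : Matrix (Fin m) (Fin m) ℤ := (Pi.basisFun ℤ (Fin m)).toMatrix ⇑bM with hP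
  set Q : Matrix (Fin m) (Fin m) ℤ := bM.toMatrix ⇑(Pi.basisFun ℤ (Fin m)) with hQ
  have hPQ : Q * P = 1 := Module.Basis.toMatrix_mul_toMatrix_flip bM (Pi.basisFun ℤ (Fin m))
  set D0 : Matrix (Fin m) (Fin k) ℤ :=
    Matrix.of fun t (j : Fin k) => if t = f j then a j else 0 with hD0
  have hPD0 : P * D0 = D := by
    ext i j
    have : (P * D0) i j = P i (f j) * a j := by
      simp [Matrix.mul_apply, hD0, mul_ite, mul_zero, Finset.sum_ite_eq']
    rw [this]
    have hPval : P i (f j) = bM (f j) i := by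
      simp [hP, Module.Basis.toMatrix_apply, Pi.basisFun_repr]
    rw [hPval, hD]
    simp [hsnf j, mul_comm]
  have hQD : Q * D = D0 := by
    rw [← hPD0, ← Matrix.mul_assoc, hPQ, Matrix.one_mul]
  have h6 : detDivisor D k = detDivisor D0 k :=
    Nat.dvd_antisymm
      (by rw [← hQD]; exact detDivisor_dvd_mul_left D Q k)
      (by rw [← hPD0]; exact detDivisor_dvd_mul_left D0 P k)
  rw [h5, h6, hD0, detDivisor_diagLike f a,
    torsionFree_iff_isUnit N bM bN f a hsnf]
  constructor
  · intro h
    exact Finset.prod_eq_one fun j _ => Int.isUnit_iff_natAbs_eq.mp (h j)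
  · intro h j
    rw [Int.isUnit_iff_natAbs_eq]
    exact Nat.dvd_one.mp (h ▸ Finset.dvd_prod_of_mem _ (Finset.mem_univ j))
end

section
/- Let A be an m×n integer matrix. Suppose P is an m×m integer matrix and Q is an n×n integer matrix, both invertible over ℤ (their determinants are units of ℤ), such that B = P * A * Q is a Smith diagonal matrix: there is α : ℕ → ℤ with α j dividing α (j+1) for all j, and B i j = α i when the underlying natural numbers of i and j are equal, and B i j = 0 otherwise. Then for every i ≤ min m n, the i-th determinant divisor satisfies d_i(A) = |α 0 · α 1 · ⋯ · α (i−1)| (the natAbs of the product of the first i diagonal entries). In particular, whenever d_i(A) ≠ 0 one has α i · d_i(A) = ± d_{i+1}(A), i.e., the elementary divisors coincide up to sign with the ratios of consecutive determinant divisors. -/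
open Matrix Finset

private lemma alpha_mono {α : ℕ → ℤ} (h : ∀ j, α j ∣ α (j + 1)) :
    ∀ {a b : ℕ}, a ≤ b → α a ∣ α b := by
  intro a b hab
  induction b, hab using Nat.le_induction with
  | base => exact dvd_rfl
  | succ b hab ih => exact ih.trans (h b)

private lemma fin_le_of_strictMono {i : ℕ} (e : Fin i → ℕ) (he : StrictMono e)
    (k : Fin i) : (k : ℕ) ≤ e k := by
  obtain ⟨v, hv⟩ := k
  induction v with
  | zero => exact Nat.zero_le _
  | succ v ih =>
    have h1 : v < i := Nat.lt_of_succ_lt hv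
    have h2 := he (show (⟨v, h1⟩ : Fin i) < ⟨v + 1, hv⟩ by simp [Fin.lt_def])
    have h3 := ih h1
    simp only [Fin.val_mk] at h3 ⊢
    omega

private lemma prod_range_dvd_prod {i : ℕ} (α : ℕ → ℤ) (hchain : ∀ j, α j ∣ α (j + 1))
    (f : Fin i → ℕ) (hf : Function.Injective f) :
    (∏ j ∈ Finset.range i, α j) ∣ ∏ k : Fin i, α (f k) := by
  set T : Finset ℕ := Finset.univ.image f with hTdef
  have hT : T.card = i := by
    rw [hTdef, Finset.card_image_of_injective _ hf, Finset.card_univ, Fintype.card_fin]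
  set e := T.orderEmbOfFin hT with he
  have h1 : ∏ k : Fin i, α (f k) = ∏ t ∈ T, α t := by
    rw [hTdef, Finset.prod_image (fun a _ b _ hab => hf hab)]
  have h2 : ∏ t ∈ T, α t = ∏ k : Fin i, α (e k) := by
    rw [show T = Finset.univ.image e by
      ext t
      simp only [Finset.mem_image, Finset.mem_univ, true_and]
      constructor
      · intro ht
        have : t ∈ Set.range e := by rw [Finset.range_orderEmbOfFin]; exact ht
        obtain ⟨k, hk⟩ := this; exact ⟨k, hk⟩
      · rintro ⟨k, rfl⟩
        have : (e k : ℕ) ∈ Set.range e := ⟨k, rfl⟩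
        rwa [Finset.range_orderEmbOfFin] at this]
    rw [Finset.prod_image (fun a _ b _ hab => e.injective hab)]
  rw [h1, h2, ← Fin.prod_univ_eq_prod_range]
  exact Finset.prod_dvd_prod_of_dvd _ _ fun k _ =>
    alpha_mono hchain (fin_le_of_strictMono e e.strictMono k)

private lemma det_mul_expand {i m : ℕ} (M : Matrix (Fin i) (Fin m) ℤ)
    (N : Matrix (Fin m) (Fin i) ℤ) :
    (M * N).det = ∑ f : Fin i → Fin m, (∏ k, M k (f k)) * (N.submatrix f id).det := by
  have h1 : (M * N).det =
      Matrix.detRowAlternating (fun k => ∑ x : Fin m, M k x • N x) := by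
    congr 1
    ext k l
    simp [Matrix.mul_apply, Finset.sum_apply]
  rw [h1]
  rw [show (Matrix.detRowAlternating (fun k => ∑ x : Fin m, M k x • N x) : ℤ) =
      Matrix.detRowAlternating.toMultilinearMap (fun k => ∑ x : Fin m, M k x • N x) from rfl,
    MultilinearMap.map_sum]
  refine Finset.sum_congr rfl fun f _ => ?_
  rw [MultilinearMap.map_smul_univ]
  simp only [smul_eq_mul]
  rfl

private lemma dvd_det_RAS {i m n : ℕ} (A : Matrix (Fin m) (Fin n) ℤ) (d : ℤ)
    (h : ∀ (ρ : Fin i → Fin m) (σ : Fin i → Fin n),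
      Function.Injective ρ → Function.Injective σ → d ∣ (A.submatrix ρ σ).det)
    (R : Matrix (Fin i) (Fin m) ℤ) (S : Matrix (Fin n) (Fin i) ℤ) :
    d ∣ (R * A * S).det := by
  rw [Matrix.mul_assoc, det_mul_expand]
  refine Finset.dvd_sum fun f _ => ?_
  by_cases hf : Function.Injective f
  · apply Dvd.dvd.mul_left
    rw [show (A * S).submatrix f id = A.submatrix f id * S from
      Matrix.submatrix_mul A S f id id Function.bijective_id]
    rw [← Matrix.det_transpose, Matrix.transpose_mul, det_mul_expand]
    refine Finset.dvd_sum fun g _ => ?_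
    by_cases hg : Function.Injective g
    · apply Dvd.dvd.mul_left
      have heq : ((A.submatrix f id)ᵀ).submatrix g id = (A.submatrix f g)ᵀ := by
        ext k l; simp [Matrix.submatrix, Matrix.transpose]
      rw [heq, Matrix.det_transpose]
      exact h f g hf hg
    · obtain ⟨a, b, hab, hne⟩ : ∃ a b, g a = g b ∧ a ≠ b := by
        simp only [Function.Injective, not_forall] at hg
        obtain ⟨a, b, hab, hne⟩ := hg; exact ⟨a, b, hab, hne⟩
      rw [Matrix.det_zero_of_row_eq hne (by ext l; simp [Matrix.submatrix, hab]), mul_zero]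
      exact dvd_zero d
  · obtain ⟨a, b, hab, hne⟩ : ∃ a b, f a = f b ∧ a ≠ b := by
      simp only [Function.Injective, not_forall] at hf
      obtain ⟨a, b, hab, hne⟩ := hf; exact ⟨a, b, hab, hne⟩
    rw [Matrix.det_zero_of_row_eq hne (by ext l; simp [Matrix.submatrix, hab]), mul_zero]
    exact dvd_zero d

private lemma detDivisor_dvd_minor {m n i : ℕ} (A : Matrix (Fin m) (Fin n) ℤ)
    (ρ : Fin i → Fin m) (σ : Fin i → Fin n) (hρ : Function.Injective ρ)
    (hσ : Function.Injective σ) :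
    ((detDivisor A i : ℤ)) ∣ (A.submatrix ρ σ).det := by
  rw [Int.natCast_dvd]
  exact Finset.gcd_dvd (Finset.mem_univ
    (⟨⟨ρ, hρ⟩, ⟨σ, hσ⟩⟩ : {ρ : Fin i → Fin m // Function.Injective ρ} ×
      {σ : Fin i → Fin n // Function.Injective σ}))

private lemma detDivisor_dvd_mul {m n i : ℕ} (A : Matrix (Fin m) (Fin n) ℤ)
    (R : Matrix (Fin m) (Fin m) ℤ) (S : Matrix (Fin n) (Fin n) ℤ) :
    detDivisor A i ∣ detDivisor (R * A * S) i := by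
  refine Finset.dvd_gcd fun p _ => ?_
  rw [← Int.natCast_dvd]
  have heq : (R * A * S).submatrix p.1.1 p.2.1 =
      (R.submatrix p.1.1 id) * A * (S.submatrix id p.2.1) := by
    rw [Matrix.submatrix_mul (R * A) S p.1.1 id p.2.1 Function.bijective_id,
      Matrix.submatrix_mul R A p.1.1 id id Function.bijective_id,
      Matrix.submatrix_id_id]
  rw [heq]
  exact dvd_det_RAS A _ (fun ρ σ hρ hσ => detDivisor_dvd_minor A ρ σ hρ hσ) _ _

set_option maxHeartbeats 1600000 in
/-- **Smith's theorem.** If `P * A * Q` is a Smith diagonal matrix with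
diagonal entries `α 0 ∣ α 1 ∣ ⋯`, where `P, Q` are invertible over `ℤ`, then for all
`i ≤ min m n` the `i`-th determinant divisor of `A` is `|α 0 ⋯ α (i-1)|`; in particular
the elementary divisors are, up to sign, the ratios of consecutive determinant
divisors. -/
theorem statement2 (m n : ℕ) (A : Matrix (Fin m) (Fin n) ℤ)
    (P : Matrix (Fin m) (Fin m) ℤ) (Q : Matrix (Fin n) (Fin n) ℤ)
    (hP : IsUnit P.det) (hQ : IsUnit Q.det)
    (α : ℕ → ℤ) (hchain : ∀ j : ℕ, α j ∣ α (j + 1))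
    (hdiag : ∀ (i : Fin m) (j : Fin n),
      ((i : ℕ) = (j : ℕ) → (P * A * Q) i j = α (i : ℕ)) ∧
      ((i : ℕ) ≠ (j : ℕ) → (P * A * Q) i j = 0)) :
    (∀ i : ℕ, i ≤ min m n →
        detDivisor A i = (∏ j ∈ Finset.range i, α j).natAbs) ∧
    (∀ i : ℕ, i + 1 ≤ min m n → detDivisor A i ≠ 0 →
        α i * (detDivisor A i : ℤ) = (detDivisor A (i + 1) : ℤ) ∨
        α i * (detDivisor A i : ℤ) = -(detDivisor A (i + 1) : ℤ)) := by
  obtain ⟨B, hB⟩ : ∃ B, B = P * A * Q := ⟨_, rfl⟩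
  rw [← hB] at hdiag
  -- d_i(A) = d_i(B)
  have hAB : ∀ i : ℕ, detDivisor A i = detDivisor B i := by
    intro i
    refine Nat.dvd_antisymm (hB ▸ detDivisor_dvd_mul A P Q) ?_
    have hA : P⁻¹ * B * Q⁻¹ = A := by
      rw [hB, show P * A * Q = P * (A * Q) from by rw [Matrix.mul_assoc],
        ← Matrix.mul_assoc, Matrix.nonsing_inv_mul P hP, Matrix.one_mul,
        Matrix.mul_assoc, Matrix.mul_nonsing_inv Q hQ, Matrix.mul_one]
    have := detDivisor_dvd_mul B P⁻¹ Q⁻¹ (i := i)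
    rwa [hA] at this
  -- every i-minor of B is divisible by ∏_{j<i} α j
  have hdvd_minor : ∀ (i : ℕ) (ρ : Fin i → Fin m) (σ : Fin i → Fin n),
      Function.Injective ρ → Function.Injective σ →
      (∏ j ∈ Finset.range i, α j) ∣ (B.submatrix ρ σ).det := by
    intro i ρ σ hρ hσ
    rw [Matrix.det_apply]
    refine Finset.dvd_sum fun π _ => ?_
    have hterm : (∏ j ∈ Finset.range i, α j) ∣ ∏ k : Fin i, B.submatrix ρ σ (π k) k := by
      by_cases hall : ∀ k : Fin i, ((ρ (π k) : ℕ)) = ((σ k : ℕ))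
      · have heq : ∀ k : Fin i, B.submatrix ρ σ (π k) k = α ((ρ (π k) : ℕ)) := fun k =>
          (hdiag (ρ (π k)) (σ k)).1 (hall k)
        rw [Finset.prod_congr rfl fun k _ => heq k]
        have := prod_range_dvd_prod α hchain (fun k => ((ρ k : ℕ)))
          (fun a b hab => hρ (Fin.val_injective hab))
        rwa [← Equiv.prod_comp π (fun k => α ((ρ k : ℕ)))] at this
      · push_neg at hall
        obtain ⟨k, hk⟩ := hall
        have hz : B.submatrix ρ σ (π k) k = 0 := (hdiag (ρ (π k)) (σ k)).2 hk
        rw [Finset.prod_eq_zero (f := fun k => B.submatrix ρ σ (π k) k)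
          (Finset.mem_univ k) hz]
        exact dvd_zero _
    simpa [Units.smul_def] using hterm.mul_left ((Equiv.Perm.sign π : ℤ))
  -- d_i(B) = |∏_{j<i} α j| for i ≤ min m n
  have hdB : ∀ i : ℕ, i ≤ min m n →
      detDivisor B i = (∏ j ∈ Finset.range i, α j).natAbs := by
    intro i hi
    have him : i ≤ m := le_trans hi (min_le_left m n)
    have hin : i ≤ n := le_trans hi (min_le_right m n)
    refine Nat.dvd_antisymm ?_ ?_
    · -- d_i(B) divides the canonical diagonal minor
      have hd : B.submatrix (Fin.castLE him) (Fin.castLE hin) =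
          Matrix.diagonal (fun k : Fin i => α (k : ℕ)) := by
        ext k l
        by_cases hkl : k = l
        · subst hkl
          rw [Matrix.submatrix_apply, Matrix.diagonal_apply_eq]
          have := (hdiag (Fin.castLE him k) (Fin.castLE hin k)).1 rfl
          simpa using this
        · have : ((Fin.castLE him k : Fin m) : ℕ) ≠ ((Fin.castLE hin l : Fin n) : ℕ) := by
            simp only [Fin.coe_castLE]
            exact fun h => hkl (Fin.val_injective h)
          simp [Matrix.diagonal, hkl, (hdiag (Fin.castLE him k) (Fin.castLE hin l)).2 this]
      have hgd : detDivisor B i ∣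
          ((B.submatrix (Fin.castLE him) (Fin.castLE hin)).det).natAbs :=
        Finset.gcd_dvd (Finset.mem_univ
          (⟨⟨Fin.castLE him, Fin.castLE_injective him⟩,
            ⟨Fin.castLE hin, Fin.castLE_injective hin⟩⟩ :
            {ρ : Fin i → Fin m // Function.Injective ρ} ×
            {σ : Fin i → Fin n // Function.Injective σ}))
      rwa [hd, Matrix.det_diagonal,
        Fin.prod_univ_eq_prod_range (fun j => α j) i] at hgd
    · refine Finset.dvd_gcd fun p _ => ?_
      exact Int.natAbs_dvd_natAbs.mpr (hdvd_minor i p.1.1 p.2.1 p.1.2 p.2.2)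
  have part1 : ∀ i : ℕ, i ≤ min m n →
      detDivisor A i = (∏ j ∈ Finset.range i, α j).natAbs := by
    intro i hi; rw [hAB i]; exact hdB i hi
  refine ⟨part1, fun i hi _ => ?_⟩
  have h1 := part1 i (le_trans (Nat.le_succ i) hi)
  have h2 := part1 (i + 1) hi
  rw [Finset.prod_range_succ, Int.natAbs_mul] at h2
  rcases Int.natAbs_eq (α i) with hα | hα
  · left
    rw [h1, h2, Nat.cast_mul, ← hα, mul_comm]
  · right
    rw [h1, h2, Nat.cast_mul]
    nth_rewrite 1 [hα]
    ring
end

section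
/- Let A be an m×n integer matrix, P an m×m integer matrix and Q an n×n integer matrix, both invertible over ℤ (their determinants are units of ℤ). Then for every i ∈ ℕ, the i-th determinant divisor of P * A * Q equals the i-th determinant divisor of A: d_i(P * A * Q) = d_i(A). -/
open Matrix

/-- Row expansion: if `d` divides every `i×i` row-minor of `C`, then `d` divides
`det (B * C)`. -/
lemma aux_row_dvd {i m : ℕ} (B : Matrix (Fin i) (Fin m) ℤ) (C : Matrix (Fin m) (Fin i) ℤ)
    (d : ℤ) (h : ∀ ρ : Fin i → Fin m, Function.Injective ρ → d ∣ (C.submatrix ρ id).det) :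
    d ∣ (B * C).det := by
  set f := (Matrix.detRowAlternating : (Fin i → ℤ) [⋀^Fin i]→ₗ[ℤ] ℤ) with hf
  have h1 : (B * C).det = f (fun k => ∑ j, B k j • C j) := by
    congr 1
    ext k l
    simp [Matrix.mul_apply]
  rw [h1]
  rw [show (f fun k => ∑ j, B k j • C j) =
      ∑ r : Fin i → Fin m, f (fun k => B k (r k) • C (r k)) from
      f.toMultilinearMap.map_sum (fun k j => B k j • C j)]
  refine Finset.dvd_sum fun r _ => ?_
  rw [show f (fun k => B k (r k) • C (r k)) = (∏ k, B k (r k)) • f (fun k => C (r k)) from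
      f.toMultilinearMap.map_smul_univ (fun k => B k (r k)) (fun k => C (r k))]
  by_cases hr : Function.Injective r
  · have h3 : f (fun k => C (r k)) = (C.submatrix r id).det := rfl
    rw [h3]
    exact Dvd.dvd.mul_left (h r hr) _
  · rw [Function.not_injective_iff] at hr
    obtain ⟨a, b, hab, hne⟩ := hr
    rw [f.map_eq_zero_of_eq _ (show C (r a) = C (r b) by rw [hab]) hne]
    simp

/-- If `d` divides every `i×i` minor of `A`, it divides every `i×i` minor of `P*A*Q`. -/
lemma aux_minor_dvd {m n i : ℕ} (A : Matrix (Fin m) (Fin n) ℤ)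
    (P : Matrix (Fin m) (Fin m) ℤ) (Q : Matrix (Fin n) (Fin n) ℤ) (d : ℤ)
    (h : ∀ (ρ : Fin i → Fin m) (σ : Fin i → Fin n), Function.Injective ρ →
      Function.Injective σ → d ∣ (A.submatrix ρ σ).det)
    (ρ : Fin i → Fin m) (σ : Fin i → Fin n) (_hρ : Function.Injective ρ)
    (_hσ : Function.Injective σ) : d ∣ ((P * A * Q).submatrix ρ σ).det := by
  rw [Matrix.submatrix_mul (P * A) Q ρ id σ Function.bijective_id,
    Matrix.submatrix_mul P A ρ id id Function.bijective_id, Matrix.mul_assoc]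
  refine aux_row_dvd _ _ d fun ρ' hρ' => ?_
  have e1 : ((A.submatrix id id * Q.submatrix id σ).submatrix ρ' id) =
      (A.submatrix ρ' id) * (Q.submatrix id σ) := by
    ext a b; simp [Matrix.mul_apply]
  rw [e1, ← Matrix.det_transpose, Matrix.transpose_mul]
  refine aux_row_dvd _ _ d fun σ' hσ' => ?_
  have e2 : (((A.submatrix ρ' id)ᵀ).submatrix σ' id) = (A.submatrix ρ' σ')ᵀ := by
    ext a b; simp
  rw [e2, Matrix.det_transpose]
  exact h ρ' σ' hρ' hσ'

lemma aux_dd_dvd {m n : ℕ} (A : Matrix (Fin m) (Fin n) ℤ)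
    (P : Matrix (Fin m) (Fin m) ℤ) (Q : Matrix (Fin n) (Fin n) ℤ) (i : ℕ) :
    detDivisor A i ∣ detDivisor (P * A * Q) i := by
  refine Finset.dvd_gcd fun p _ => ?_
  rw [← Int.natAbs_natCast (detDivisor A i), Int.natAbs_dvd_natAbs]
  refine aux_minor_dvd A P Q _ (fun ρ σ hρ hσ => ?_) p.1.1 p.2.1 p.1.2 p.2.2
  rw [← Int.natAbs_dvd_natAbs, Int.natAbs_natCast]
  exact Finset.gcd_dvd (Finset.mem_univ
    ((⟨ρ, hρ⟩, ⟨σ, hσ⟩) : {ρ : Fin i → Fin m // Function.Injective ρ} ×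
      {σ : Fin i → Fin n // Function.Injective σ}))

/-- Determinant divisors are invariant under multiplication on
either side by matrices invertible over `ℤ`. -/
theorem statement3 (m n : ℕ) (A : Matrix (Fin m) (Fin n) ℤ)
    (P : Matrix (Fin m) (Fin m) ℤ) (Q : Matrix (Fin n) (Fin n) ℤ)
    (hP : IsUnit P.det) (hQ : IsUnit Q.det) (i : ℕ) :
    detDivisor (P * A * Q) i = detDivisor A i := by
  refine Nat.dvd_antisymm ?_ (aux_dd_dvd A P Q i)
  have hA : A = P⁻¹ * (P * A * Q) * Q⁻¹ := by
    rw [Matrix.mul_assoc (P⁻¹) _ _]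
    rw [Matrix.mul_assoc (P * A) Q Q⁻¹, Matrix.mul_nonsing_inv Q hQ, Matrix.mul_one,
      ← Matrix.mul_assoc, Matrix.nonsing_inv_mul P hP, Matrix.one_mul]
  conv_rhs => rw [hA]
  exact aux_dd_dvd (P * A * Q) (P⁻¹) (Q⁻¹) i
end

section
/- Let A be an m×(n+1) integer matrix, c : Fin (n+1) a column index, and r : Fin m a row index such that A r c = 1 or A r c = −1, and A r' c = 0 for every r' ≠ r. Let A' be the m×n matrix obtained from A by deleting column c. Then every square submatrix of A (i.e., A.submatrix ρ σ for injective ρ : Fin i → Fin m, σ : Fin i → Fin (n+1), any i) has determinant in {−1, 0, 1} if and only if every square submatrix of A' has determinant in {−1, 0, 1}. The analogous statement holds with the roles of rows and columns exchanged. -/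
private lemma memS_mul {a b : ℤ} (ha : a ∈ ({-1, 0, 1} : Set ℤ))
    (hb : b ∈ ({-1, 0, 1} : Set ℤ)) : a * b ∈ ({-1, 0, 1} : Set ℤ) := by
  simp only [Set.mem_insert_iff, Set.mem_singleton_iff] at *
  rcases ha with h | h | h <;> rcases hb with h' | h' | h' <;> subst h <;> subst h' <;> norm_num

private lemma factor_through {n i : ℕ} (c : Fin (n + 1)) (σ : Fin i → Fin (n + 1))
    (hσ : Function.Injective σ) (h : ∀ j, σ j ≠ c) :
    ∃ τ : Fin i → Fin n, Function.Injective τ ∧ σ = c.succAbove ∘ τ := by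
  choose τ hτ using fun j => Fin.exists_succAbove_eq (h j)
  exact ⟨τ, fun a b hab => hσ (by rw [← hτ a, ← hτ b, hab]),
    funext fun j => (hτ j).symm⟩

private lemma col_case (m n : ℕ) (A : Matrix (Fin m) (Fin (n + 1)) ℤ) (r : Fin m)
    (c : Fin (n + 1)) (h1 : A r c = 1 ∨ A r c = -1)
    (h0 : ∀ r' : Fin m, r' ≠ r → A r' c = 0) :
    ((∀ (i : ℕ) (ρ : Fin i → Fin m) (σ : Fin i → Fin (n + 1)),
        Function.Injective ρ → Function.Injective σ →
        (A.submatrix ρ σ).det ∈ ({-1, 0, 1} : Set ℤ)) ↔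
      (∀ (i : ℕ) (ρ : Fin i → Fin m) (σ : Fin i → Fin n),
        Function.Injective ρ → Function.Injective σ →
        ((A.submatrix id c.succAbove).submatrix ρ σ).det ∈ ({-1, 0, 1} : Set ℤ))) := by
  constructor
  · intro h i ρ σ hρ hσ
    rw [Matrix.submatrix_submatrix]
    exact h i (id ∘ ρ) (c.succAbove ∘ σ) hρ (Fin.succAbove_right_injective.comp hσ)
  · intro h i ρ σ hρ hσ
    by_cases hc : ∃ j, σ j = c
    · obtain ⟨j, hj⟩ := hc
      match i, ρ, σ, hρ, hσ, j, hj with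
      | i + 1, ρ, σ, hρ, hσ, j, hj =>
        by_cases hr : ∃ k, ρ k = r
        · obtain ⟨k, hk⟩ := hr
          rw [Matrix.det_succ_column _ j, Finset.sum_eq_single k]
          · have hne : ∀ l : Fin i, σ (j.succAbove l) ≠ c := fun l hl => by
              exact Fin.succAbove_ne j l (hσ (hl.trans hj.symm))
            obtain ⟨τ, hτi, hτ⟩ := factor_through c (σ ∘ j.succAbove)
              (hσ.comp (Fin.succAbove_right_injective)) hne
            have hsub : (A.submatrix ρ σ).submatrix k.succAbove j.succAbove
                = (A.submatrix id c.succAbove).submatrix (ρ ∘ k.succAbove) τ := by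
              simp only [Matrix.submatrix_submatrix]
              exact congrArg (A.submatrix (ρ ∘ k.succAbove)) hτ
            rw [hsub]
            apply memS_mul
            apply memS_mul
            · rcases neg_one_pow_eq_or ℤ ((k : ℕ) + (j : ℕ)) with h' | h' <;>
                rw [h'] <;> simp
            · simp only [Matrix.submatrix_apply, hk, hj]
              rcases h1 with h' | h' <;> rw [h'] <;> simp
            · exact h i (ρ ∘ k.succAbove) τ (hρ.comp (Fin.succAbove_right_injective)) hτi
          · intro b _ hb
            have : A (ρ b) (σ j) = 0 := by
              rw [hj]; exact h0 _ (fun hbr => hb (hρ (hbr.trans hk.symm)))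
            simp [Matrix.submatrix_apply, this]
          · intro hk'; exact absurd (Finset.mem_univ k) hk'
        · push_neg at hr
          have : (A.submatrix ρ σ).det = 0 := by
            apply Matrix.det_eq_zero_of_column_eq_zero j
            intro b
            simp only [Matrix.submatrix_apply, hj]
            exact h0 _ (hr b)
          rw [this]; simp
    · push_neg at hc
      obtain ⟨τ, hτi, hτ⟩ := factor_through c σ hσ hc
      have : A.submatrix ρ σ = (A.submatrix id c.succAbove).submatrix ρ τ := by
        simp only [Matrix.submatrix_submatrix]
        exact congrArg (A.submatrix ρ) hτ
      rw [this]
      exact h i ρ τ hρ hτi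

/-- If a column of an integer matrix has a unique nonzero entry,
equal to `±1`, then all square minors of the matrix lie in `{-1, 0, 1}` iff all
square minors of the matrix with that column deleted lie in `{-1, 0, 1}`; and the
analogous statement holds with the roles of rows and columns exchanged. -/
theorem statement7 (m n : ℕ) :
    (∀ (A : Matrix (Fin m) (Fin (n + 1)) ℤ) (r : Fin m) (c : Fin (n + 1)),
      (A r c = 1 ∨ A r c = -1) → (∀ r' : Fin m, r' ≠ r → A r' c = 0) →
      ((∀ (i : ℕ) (ρ : Fin i → Fin m) (σ : Fin i → Fin (n + 1)),
          Function.Injective ρ → Function.Injective σ →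
          (A.submatrix ρ σ).det ∈ ({-1, 0, 1} : Set ℤ)) ↔
        (∀ (i : ℕ) (ρ : Fin i → Fin m) (σ : Fin i → Fin n),
          Function.Injective ρ → Function.Injective σ →
          ((A.submatrix id c.succAbove).submatrix ρ σ).det ∈ ({-1, 0, 1} : Set ℤ)))) ∧
    (∀ (A : Matrix (Fin (m + 1)) (Fin n) ℤ) (r : Fin (m + 1)) (c : Fin n),
      (A r c = 1 ∨ A r c = -1) → (∀ c' : Fin n, c' ≠ c → A r c' = 0) →
      ((∀ (i : ℕ) (ρ : Fin i → Fin (m + 1)) (σ : Fin i → Fin n),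
          Function.Injective ρ → Function.Injective σ →
          (A.submatrix ρ σ).det ∈ ({-1, 0, 1} : Set ℤ)) ↔
        (∀ (i : ℕ) (ρ : Fin i → Fin m) (σ : Fin i → Fin n),
          Function.Injective ρ → Function.Injective σ →
          ((A.submatrix r.succAbove id).submatrix ρ σ).det ∈ ({-1, 0, 1} : Set ℤ)))) := by
  constructor
  · intro A r c h1 h0
    exact col_case m n A r c h1 h0
  · intro A r c h1 h0
    have key := col_case n m A.transpose c r h1 (fun c' hc' => h0 c' hc')
    constructor
    · intro h i ρ σ hρ hσ
      have := key.mp (fun i ρ σ hρ hσ => by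
        rw [show A.transpose.submatrix ρ σ = (A.submatrix σ ρ).transpose from rfl,
          Matrix.det_transpose]
        exact h i σ ρ hσ hρ) i σ ρ hσ hρ
      rwa [show (A.transpose.submatrix id r.succAbove).submatrix σ ρ
          = ((A.submatrix r.succAbove id).submatrix ρ σ).transpose from rfl,
        Matrix.det_transpose] at this
    · intro h i ρ σ hρ hσ
      have := key.mpr (fun i ρ σ hρ hσ => by
        rw [show (A.transpose.submatrix id r.succAbove).submatrix ρ σ
            = ((A.submatrix r.succAbove id).submatrix σ ρ).transpose from rfl,
          Matrix.det_transpose]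
        exact h i σ ρ hσ hρ) i σ ρ hσ hρ
      rwa [show A.transpose.submatrix σ ρ = (A.submatrix ρ σ).transpose from rfl,
        Matrix.det_transpose] at this
end

section
/- Let V be a finite type, G : SimpleGraph V a connected graph, and m : V → V → ℕ a symmetric labeling (m i j = m j i for all i, j). Assume there exist vertices u, v with G.Adj u v and m u v even. Suppose x : V → ℤ × ℤ satisfies: for all i, j with G.Adj i j, one has (x i).1 = (x j).1 and (x i).2 = (x j).2, and moreover (x i).1 = (x j).2 whenever additionally m i j is even. Then there exists a : ℤ such that x i = (a, a) for every i : V. -/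
/-- On a finite connected graph with a symmetric labeling having at
least one edge with even label, any `ℤ × ℤ`-valued function whose coordinates agree
across every edge, and whose two coordinates agree across edges with even label,
is constant of the form `(a, a)`. -/
theorem statement8 (V : Type*) [Fintype V] (G : SimpleGraph V) (hG : G.Connected)
    (m : V → V → ℕ) (hsym : ∀ i j : V, m i j = m j i)
    (hedge : ∃ u v : V, G.Adj u v ∧ Even (m u v))
    (x : V → ℤ × ℤ)
    (h1 : ∀ i j : V, G.Adj i j → (x i).1 = (x j).1 ∧ (x i).2 = (x j).2)
    (h2 : ∀ i j : V, G.Adj i j → Even (m i j) → (x i).1 = (x j).2) :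
    ∃ a : ℤ, ∀ i : V, x i = (a, a) := by
  have hconst : ∀ i j : V, x i = x j := by
    intro i j
    obtain ⟨w⟩ := hG.preconnected i j
    induction w with
    | nil => rfl
    | cons h _ ih =>
      rename_i a b c h'
      have := h1 _ _ h
      exact (Prod.ext this.1 this.2).trans ih
  obtain ⟨u, v, huv, heven⟩ := hedge
  have h12 : (x u).1 = (x u).2 := by
    have := h2 u v huv heven
    rw [this, ← hconst u v]
  exact ⟨(x u).1, fun i => (hconst i u).trans (Prod.ext rfl h12.symm)⟩
end

section
/- Let V be a finite type, G : SimpleGraph V a connected graph, and m : V → V → ℕ a symmetric labeling (m i j = m j i for all i, j). Assume there exist vertices u, v with G.Adj u v and m u v even. Let k be a positive integer and β : V → ℤ × ℤ a function such that: for all i, j with G.Adj i j, k divides (β i).1 − (β j).1 and k divides (β i).2 − (β j).2, and moreover k divides (β i).1 − (β j).2 whenever additionally m i j is even. Then there exists c : ℤ such that for every i : V, k divides (β i).1 − c and k divides (β i).2 − c. -/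
/-- On a finite connected graph with a symmetric labeling having at
least one edge with even label, if the coordinates of `β : V → ℤ × ℤ` are congruent
mod `k` across every edge, with the two coordinates congruent across edges of even
label, then all coordinates of `β` are congruent mod `k` to a single integer `c`. -/
theorem statement9 (V : Type*) [Fintype V] (G : SimpleGraph V) (hG : G.Connected)
    (m : V → V → ℕ) (hsym : ∀ i j : V, m i j = m j i)
    (hedge : ∃ u v : V, G.Adj u v ∧ Even (m u v))
    (k : ℤ) (hk : 0 < k) (β : V → ℤ × ℤ)
    (h1 : ∀ i j : V, G.Adj i j →
      k ∣ (β i).1 - (β j).1 ∧ k ∣ (β i).2 - (β j).2)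
    (h2 : ∀ i j : V, G.Adj i j → Even (m i j) → k ∣ (β i).1 - (β j).2) :
    ∃ c : ℤ, ∀ i : V, k ∣ (β i).1 - c ∧ k ∣ (β i).2 - c := by
  obtain ⟨u, v, huv, hm⟩ := hedge
  have key : ∀ i j : V, G.Reachable i j → k ∣ (β i).1 - (β j).1 ∧ k ∣ (β i).2 - (β j).2 := by
    intro i j hij
    obtain ⟨w⟩ := hij
    induction w with
    | nil => simp
    | cons h p ih =>
      obtain ⟨ha, hb⟩ := h1 _ _ h
      obtain ⟨hc, hd⟩ := ih
      constructor
      · have := dvd_add ha hc; simpa using this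
      · have := dvd_add hb hd; simpa using this
  refine ⟨(β u).1, fun i => ?_⟩
  obtain ⟨ha, hb⟩ := key i u (hG.preconnected i u)
  refine ⟨ha, ?_⟩
  obtain ⟨hc, hd⟩ := key v u (hG.preconnected v u)
  have h3 : k ∣ (β u).1 - (β v).2 := h2 u v huv hm
  have : (β i).2 - (β u).1 = ((β i).2 - (β u).2) + ((β u).2 - (β v).2) - ((β u).1 - (β v).2) := by ring
  rw [this]
  have hd' : k ∣ (β u).2 - (β v).2 := by rw [← neg_sub]; exact dvd_neg.mpr hd
  exact dvd_sub (dvd_add hb hd') h3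
end
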